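/- Let M be a strongly base orderable matroid with bases R₁ and S, and let φ₁ : R₁ → B₁ be a bijection witnessing strong base orderability between R₁ and B₁, where R₁ and B₁ are disjoint and S = (R₁ \ (R₁ \ S)) ∪ φ₁(R₁ \ S). Then exchanging the elements of R₁ \ S with their images φ₁(R₁ \ S) one at a time (in any order) yields a sequence of feasible symmetric exchanges transforming (R₁, B₁) into (S, (R₁ ∪ B₁) \ S). -/

import Mathlib

open Set

variable {α : Type*}

/-- `SymExchSeq M P L Q` : the list `L` of pairs `(e, f)` records a sequence of feasible
symmetric exchanges transforming the pair of disjoint bases `P` into `Q`. -/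
def SymExchSeq (M : Matroid α) : Set α × Set α → List (α × α) → Set α × Set α → Prop
  | P, [], Q => P = Q
  | P, (e, f) :: L, Q =>
      ∃ P' : Set α × Set α, e ∈ P.1 ∧ f ∈ P.2 ∧
        P'.1 = insert f (P.1 \ {e}) ∧ P'.2 = insert e (P.2 \ {f}) ∧
        M.IsBase P'.1 ∧ M.IsBase P'.2 ∧ SymExchSeq M P' L Q

/-- Let `φ₁ : R₁ → B₁` be a bijection witnessing strong base orderability between the
disjoint bases `R₁` and `B₁`, and let `S` be a basis with
`S = (R₁ \ (R₁ \ S)) ∪ φ₁ '' (R₁ \ S)`. Then exchanging the elements of `R₁ \ S` with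
their images under `φ₁` one at a time, in any order (given by a duplicate-free list `L`
enumerating `R₁ \ S`), is a feasible sequence of symmetric exchanges transforming
`(R₁, B₁)` into `(S, (R₁ ∪ B₁) \ S)`. -/
theorem stmt5 (M : Matroid α) (R₁ B₁ S : Set α)
    (hR₁ : M.IsBase R₁) (hB₁ : M.IsBase B₁) (hd₁ : Disjoint R₁ B₁) (hS : M.IsBase S)
    (φ₁ : α → α) (hφ₁ : Set.BijOn φ₁ R₁ B₁)
    (hφ₁base : ∀ X ⊆ R₁, M.IsBase ((R₁ \ X) ∪ φ₁ '' X))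
    (hSeq : S = (R₁ \ (R₁ \ S)) ∪ φ₁ '' (R₁ \ S))
    (L : List α) (hnodup : L.Nodup) (hmem : ∀ a : α, a ∈ L ↔ a ∈ R₁ \ S) :
    SymExchSeq M (R₁, B₁) (L.map fun a => (a, φ₁ a)) (S, (R₁ ∪ B₁) \ S) := by
  have hinj : Set.InjOn φ₁ R₁ := hφ₁.injOn
  have himg : φ₁ '' R₁ = B₁ := hφ₁.image_eq
  -- key: φ₁ '' (R₁ ∩ S) = B₁ \ S
  have hkey : φ₁ '' (R₁ ∩ S) = B₁ \ S := by
    have hS' : S = (R₁ ∩ S) ∪ φ₁ '' (R₁ \ S) := by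
      nth_rewrite 1 [hSeq]; rw [Set.diff_diff_right_self]
    ext b
    constructor
    · rintro ⟨a, ⟨haR, haS⟩, rfl⟩
      refine ⟨himg ▸ mem_image_of_mem φ₁ haR, ?_⟩
      intro hbS
      rw [hS'] at hbS
      rcases hbS with hb | ⟨a', ha', hba⟩
      · exact Set.disjoint_left.mp hd₁ hb.1 (himg ▸ mem_image_of_mem φ₁ haR)
      · have : a' = a := hinj ha'.1 haR hba
        exact ha'.2 (this ▸ haS)
    · rintro ⟨hbB, hbS⟩
      obtain ⟨a, haR, rfl⟩ := himg ▸ hbB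
      refine ⟨a, ⟨haR, ?_⟩, rfl⟩
      by_contra haS
      exact hbS (hS' ▸ Or.inr (mem_image_of_mem φ₁ ⟨haR, haS⟩))
  suffices H : ∀ (L : List α) (X : Set α), X ⊆ R₁ \ S → L.Nodup →
      (∀ a, a ∈ L ↔ a ∈ (R₁ \ S) \ X) →
      SymExchSeq M ((R₁ \ X) ∪ φ₁ '' X, (R₁ \ (R₁ \ X)) ∪ φ₁ '' (R₁ \ X))
        (L.map fun a => (a, φ₁ a)) (S, (R₁ ∪ B₁) \ S) by
    have := H L ∅ (empty_subset _) hnodup (by simpa using hmem)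
    simpa [himg] using this
  intro L
  induction L with
  | nil =>
    intro X hX _ hm
    have hXeq : X = R₁ \ S := by
      refine hX.antisymm fun a ha => ?_
      by_contra haX
      exact List.not_mem_nil ((hm a).mpr ⟨ha, haX⟩)
    subst hXeq
    show _ = _
    have h1 : (R₁ \ (R₁ \ S)) ∪ φ₁ '' (R₁ \ S) = S := hSeq.symm
    have h2 : R₁ \ (R₁ \ (R₁ \ S)) = R₁ \ S := by
      rw [Set.diff_diff_right_self]; ext x; simp
    have h3 : (R₁ \ (R₁ \ (R₁ \ S))) ∪ φ₁ '' (R₁ \ (R₁ \ S)) = (R₁ ∪ B₁) \ S := by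
      rw [h2, Set.diff_diff_right_self, hkey, Set.union_diff_distrib]
    exact Prod.ext_iff.mpr ⟨h1, h3⟩
  | cons e L ih =>
    intro X hX hnd hm
    obtain ⟨heL, hndL⟩ := List.nodup_cons.mp hnd
    have he : e ∈ (R₁ \ S) \ X := (hm e).mp List.mem_cons_self
    have heR : e ∈ R₁ := he.1.1
    have heX : e ∉ X := he.2
    have hXR : X ⊆ R₁ := hX.trans (Set.diff_subset)
    have hX' : insert e X ⊆ R₁ \ S := Set.insert_subset he.1 hX
    have hX'R : insert e X ⊆ R₁ := hX'.trans Set.diff_subset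
    have heBnot : e ∉ φ₁ '' X := fun h =>
      Set.disjoint_left.mp hd₁ heR (himg ▸ Set.image_mono hXR h)
    have hφeB : φ₁ e ∈ B₁ := himg ▸ mem_image_of_mem φ₁ heR
    have hφeX : φ₁ e ∉ X := fun h => Set.disjoint_left.mp hd₁ (hXR h) hφeB
    -- set identities
    have eq1 : (R₁ \ insert e X) ∪ φ₁ '' insert e X
        = insert (φ₁ e) ((((R₁ \ X) ∪ φ₁ '' X)) \ {e}) := by
      rw [Set.image_insert_eq, Set.union_insert, Set.union_diff_distrib,
        Set.diff_singleton_eq_self heBnot, Set.diff_diff, Set.union_singleton]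
    have eq2 : (R₁ \ (R₁ \ insert e X)) ∪ φ₁ '' (R₁ \ insert e X)
        = insert e ((((R₁ \ (R₁ \ X)) ∪ φ₁ '' (R₁ \ X))) \ {φ₁ e}) := by
      rw [Set.diff_diff_cancel_left hX'R, Set.diff_diff_cancel_left hXR]
      have h4 : R₁ \ insert e X = (R₁ \ X) \ {e} := by
        rw [Set.diff_diff, Set.union_singleton]
      have h5 : φ₁ '' ((R₁ \ X) \ {e}) = φ₁ '' (R₁ \ X) \ {φ₁ e} := by
        rw [(hinj.mono Set.diff_subset).image_diff_subset (by simpa using ⟨heR, heX⟩),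
          Set.image_singleton]
      rw [h4, h5, Set.union_diff_distrib, Set.diff_singleton_eq_self hφeX,
        Set.insert_union]
    simp only [List.map_cons]
    refine ⟨((R₁ \ insert e X) ∪ φ₁ '' insert e X,
        (R₁ \ (R₁ \ insert e X)) ∪ φ₁ '' (R₁ \ insert e X)), ?_, ?_, eq1, eq2, ?_, ?_, ?_⟩
    · exact Or.inl ⟨heR, heX⟩
    · exact Or.inr (mem_image_of_mem φ₁ ⟨heR, heX⟩)
    · exact hφ₁base _ hX'R
    · exact hφ₁base _ Set.diff_subset
    · refine ih (insert e X) hX' hndL fun a => ⟨fun ha => ?_, fun ha => ?_⟩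
      · have h := (hm a).mp (List.mem_cons_of_mem e ha)
        have hne : a ≠ e := fun h' => heL (h' ▸ ha)
        exact ⟨h.1, by simp [hne, h.2]⟩
      · have h1 : a ∈ (R₁ \ S) \ X := ⟨ha.1, fun h => ha.2 (Set.mem_insert_of_mem e h)⟩
        have hne : a ≠ e := fun h' => ha.2 (h' ▸ Set.mem_insert e X)
        rcases List.mem_cons.mp ((hm a).mpr h1) with h | h
        · exact absurd h hne
        · exact h
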